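/- (Restricted Johnson bound for b-symbol distance) Let n, d, w be positive integers such that d - 2w + q^b w^2 / ((q^b - 1) n) > 0. Then A_b(n,d,w,q) ≤ ⌊ d / (d - 2w + q^b w^2 / ((q^b-1)n)) ⌋. -/

import Mathlib

open Finset

/-- Cyclic coordinate access: `cget z k` is the coordinate `z_k`, indices taken mod `n`. -/
def cget {Fq : Type*} [Zero Fq] {n : ℕ} (y : Fin n → Fq) (k : ℕ) : Fq :=
  if h : n = 0 then 0 else y ⟨k % n, Nat.mod_lt k (Nat.pos_of_ne_zero h)⟩

/-- The `b`-symbol weight of a vector `y ∈ Fq^n`. -/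
def wtb {Fq : Type*} [Zero Fq] [DecidableEq Fq] {n : ℕ} (b : ℕ) (y : Fin n → Fq) : ℕ :=
  ((Finset.range n).filter fun i => ∃ j : Fin b, cget y (i + j) ≠ 0).card

/-- The `b`-symbol distance on `Fq^n`. -/
def db {Fq : Type*} [Field Fq] [DecidableEq Fq] {n : ℕ} (b : ℕ) (x y : Fin n → Fq) : ℕ :=
  wtb b (x - y)


/-- `Awsize Fq n b d w` : the largest size of a code in `Fq^n` with minimum `b`-symbol
distance at least `d` all of whose codewords have `b`-symbol weight exactly `w`. -/
noncomputable def Awsize (Fq : Type*) [Field Fq] [Fintype Fq] [DecidableEq Fq] (n b d w : ℕ) : ℕ :=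
  sSup {M | ∃ C : Finset (Fin n → Fq),
    (∀ x ∈ C, ∀ y ∈ C, x ≠ y → d ≤ db b x y) ∧ (∀ x ∈ C, wtb b x = w) ∧ C.card = M}

/-- Abstract restricted Johnson-bound counting argument for a family of `Fintype.card κ`
vectors over an alphabet `A`, all of Hamming weight `w` (relative to the symbol `z`)
and pairwise Hamming distance at least `d`. -/
lemma johnson_aux {κ I A : Type*} [Fintype κ] [Fintype I] [Fintype A]
    [DecidableEq κ] [DecidableEq A] (z : A) (F : κ → I → A) {d w : ℕ}
    (hdist : ∀ k l : κ, k ≠ l → d ≤ (univ.filter fun i => F k i ≠ F l i).card)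
    (hw : ∀ k, (univ.filter fun i => F k i ≠ z).card = w)
    (hn : 0 < Fintype.card I) (hQ : 2 ≤ Fintype.card A) :
    (Fintype.card κ : ℝ) * ((d : ℝ) - 2 * w +
        (Fintype.card A : ℝ) * (w : ℝ) ^ 2 /
          (((Fintype.card A : ℝ) - 1) * (Fintype.card I : ℝ)))
      ≤ (d : ℝ) := by
  classical
  set M := Fintype.card κ with hM
  set n := Fintype.card I with hnn
  set Q := Fintype.card A with hQQ
  have hQ1' : (0:ℝ) < (Q:ℝ) - 1 := by
    have : (2:ℝ) ≤ Q := by exact_mod_cast hQ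
    linarith
  have hn' : (0:ℝ) < n := by exact_mod_cast hn
  rcases Nat.eq_zero_or_pos M with hM0 | hM1
  · rw [hM0]; push_cast; simp
  have hMpos : (0:ℝ) < M := by exact_mod_cast hM1
  set m : I → A → ℕ := fun i a => (univ.filter fun k => F k i = a).card with hm
  set e : I → ℕ := fun i => (univ.filter fun k => F k i ≠ z).card with he
  have h1 : ∀ i, ∑ a, m i a = M := by
    intro i
    rw [hM, ← Finset.card_univ]
    exact (Finset.card_eq_sum_card_fiberwise fun k _ => mem_univ (F k i)).symm
  have h2 : ∀ i, m i z + e i = M := by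
    intro i
    rw [hM, ← Finset.card_univ,
      ← Finset.card_filter_add_card_filter_not (p := fun k => F k i = z)]
  have h3 : ∀ i, e i = ∑ a ∈ univ.erase z, m i a := by
    intro i
    have h := Finset.add_sum_erase univ (m i) (mem_univ z)
    have h1' := h1 i
    have h2' := h2 i
    omega
  have h4 : ∑ i : I, e i = M * w := by
    calc ∑ i : I, e i = ∑ i : I, ∑ k : κ, if F k i ≠ z then 1 else 0 := by
          refine Finset.sum_congr rfl fun i _ => ?_
          exact Finset.card_filter _ _
      _ = ∑ k : κ, ∑ i : I, if F k i ≠ z then 1 else 0 := Finset.sum_comm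
      _ = ∑ k : κ, w := by
          refine Finset.sum_congr rfl fun k _ => ?_
          rw [← Finset.card_filter]; exact hw k
      _ = M * w := by rw [Finset.sum_const, Finset.card_univ, smul_eq_mul]
  have h5 : ∀ i, (∑ k : κ, ∑ l : κ, if F k i = F l i then (1:ℕ) else 0)
      = ∑ a : A, m i a ^ 2 := by
    intro i
    have step1 : ∀ k : κ, (∑ l : κ, if F k i = F l i then (1:ℕ) else 0) = m i (F k i) := by
      intro k
      rw [← Finset.card_filter]
      congr 1
      ext l
      simp [eq_comm]
    have step2 : ∀ k : κ, m i (F k i) = ∑ a : A, if F k i = a then m i a else 0 := by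
      intro k; rw [Finset.sum_ite_eq]; simp
    simp_rw [step1, step2]
    rw [Finset.sum_comm]
    refine Finset.sum_congr rfl fun a _ => ?_
    rw [← Finset.sum_filter, Finset.sum_const, smul_eq_mul, sq]
  set S : ℕ := ∑ k : κ, ∑ l : κ, (univ.filter fun i => F k i ≠ F l i).card with hS
  have hlowN : M * (M - 1) * d ≤ S := by
    have step : ∀ k : κ, (M - 1) * d ≤ ∑ l : κ, (univ.filter fun i => F k i ≠ F l i).card := by
      intro k
      calc (M - 1) * d = ∑ l ∈ univ.erase k, d := by
            rw [Finset.sum_const, smul_eq_mul, Finset.card_erase_of_mem (mem_univ k),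
              Finset.card_univ]
        _ ≤ ∑ l ∈ univ.erase k, (univ.filter fun i => F k i ≠ F l i).card := by
            refine Finset.sum_le_sum fun l hl => ?_
            exact hdist k l fun h => (Finset.mem_erase.mp hl).1 h.symm
        _ ≤ ∑ l : κ, (univ.filter fun i => F k i ≠ F l i).card :=
            Finset.sum_le_sum_of_subset (Finset.subset_univ _)
    calc M * (M - 1) * d = ∑ _k : κ, (M - 1) * d := by
          rw [Finset.sum_const, Finset.card_univ, smul_eq_mul, mul_assoc]
      _ ≤ S := Finset.sum_le_sum fun k _ => step k
  have hcol : (S:ℝ) = ∑ i : I, ((M:ℝ)^2 - ∑ a : A, (m i a : ℝ)^2) := by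
    have expand : (S:ℝ)
        = ∑ k : κ, ∑ l : κ, ∑ i : I, (1 - if F k i = F l i then (1:ℝ) else 0) := by
      rw [hS]
      push_cast
      refine Finset.sum_congr rfl fun k _ => Finset.sum_congr rfl fun l _ => ?_
      rw [Finset.card_filter]
      push_cast
      refine Finset.sum_congr rfl fun i _ => ?_
      by_cases h : F k i = F l i <;> simp [h]
    calc (S:ℝ) = ∑ k : κ, ∑ i : I, ∑ l : κ, (1 - if F k i = F l i then (1:ℝ) else 0) := by
          rw [expand]; exact Finset.sum_congr rfl fun k _ => Finset.sum_comm
      _ = ∑ i : I, ∑ k : κ, ∑ l : κ, (1 - if F k i = F l i then (1:ℝ) else 0) :=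
          Finset.sum_comm
      _ = ∑ i : I, ((M:ℝ)^2 - ∑ a : A, (m i a : ℝ)^2) := by
          refine Finset.sum_congr rfl fun i _ => ?_
          have h5' := congrArg (Nat.cast (R := ℝ)) (h5 i)
          push_cast at h5'
          simp only [Finset.sum_sub_distrib, Finset.sum_const, Finset.card_univ, smul_eq_mul,
            mul_one, h5']
          ring
  have hcolbound : ∀ i : I, (M:ℝ)^2 - ∑ a : A, (m i a : ℝ)^2
      ≤ 2 * M * e i - (Q:ℝ)/((Q:ℝ)-1) * (e i : ℝ)^2 := by
    intro i
    have hsplit : (∑ a : A, (m i a : ℝ)^2)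
        = (m i z : ℝ)^2 + ∑ a ∈ univ.erase z, (m i a : ℝ)^2 := by
      rw [← Finset.add_sum_erase univ (fun a => (m i a : ℝ)^2) (mem_univ z)]
    have hcauchy : ((e i : ℝ))^2 ≤ ((Q:ℝ) - 1) * ∑ a ∈ univ.erase z, (m i a : ℝ)^2 := by
      have hc := sq_sum_le_card_mul_sum_sq (s := univ.erase z) (f := fun a => (m i a : ℝ))
      have hcard : ((univ.erase z).card : ℝ) = (Q:ℝ) - 1 := by
        rw [Finset.card_erase_of_mem (mem_univ z), Finset.card_univ, ← hQQ]
        have : 1 ≤ Q := by omega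
        push_cast [Nat.cast_sub this]
        ring
      have hsum : (∑ a ∈ univ.erase z, (m i a : ℝ)) = (e i : ℝ) := by
        rw [h3 i]; push_cast; ring
      rw [hsum] at hc
      calc ((e i : ℝ))^2 ≤ ((univ.erase z).card : ℝ) * ∑ a ∈ univ.erase z, (m i a : ℝ)^2 := by
            exact_mod_cast hc
        _ = ((Q:ℝ) - 1) * ∑ a ∈ univ.erase z, (m i a : ℝ)^2 := by rw [hcard]
    have hdivle : (e i : ℝ)^2 / ((Q:ℝ) - 1) ≤ ∑ a ∈ univ.erase z, (m i a : ℝ)^2 :=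
      (div_le_iff₀ hQ1').mpr (by linarith [hcauchy])
    have hmz : (m i z : ℝ) = (M:ℝ) - (e i : ℝ) := by
      have h2' := h2 i
      have : ((m i z + e i : ℕ) : ℝ) = (M:ℝ) := by exact_mod_cast congrArg (Nat.cast (R := ℝ)) h2'
      push_cast at this
      linarith
    have hident : (Q:ℝ)/((Q:ℝ)-1) * (e i : ℝ)^2
        = (e i : ℝ)^2 + (e i : ℝ)^2/((Q:ℝ)-1) := by
      field_simp
      ring
    rw [hsplit, hmz, hident]
    nlinarith [hdivle]
  have hup : (S:ℝ) ≤ 2 * M * (M * w) - (Q:ℝ)/((Q:ℝ)-1) * ∑ i : I, (e i : ℝ)^2 := by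
    rw [hcol]
    calc ∑ i : I, ((M:ℝ)^2 - ∑ a : A, (m i a : ℝ)^2)
        ≤ ∑ i : I, (2 * M * e i - (Q:ℝ)/((Q:ℝ)-1) * (e i : ℝ)^2) :=
          Finset.sum_le_sum fun i _ => hcolbound i
      _ = 2 * M * (∑ i : I, (e i : ℝ)) - (Q:ℝ)/((Q:ℝ)-1) * ∑ i : I, (e i : ℝ)^2 := by
          rw [Finset.sum_sub_distrib, Finset.mul_sum, Finset.mul_sum]
      _ = 2 * M * (M * w) - (Q:ℝ)/((Q:ℝ)-1) * ∑ i : I, (e i : ℝ)^2 := by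
          have : (∑ i : I, (e i : ℝ)) = (M:ℝ) * w := by
            rw [← Nat.cast_sum, h4]; push_cast; ring
          rw [this]
  have hcauchy2 : ((M:ℝ) * w)^2 / (n:ℝ) ≤ ∑ i : I, (e i : ℝ)^2 := by
    have hc := sq_sum_le_card_mul_sum_sq (s := (univ : Finset I)) (f := fun i => (e i : ℝ))
    have hsum : (∑ i : I, (e i : ℝ)) = (M:ℝ) * w := by
      rw [← Nat.cast_sum, h4]; push_cast; ring
    rw [hsum, Finset.card_univ] at hc
    rw [div_le_iff₀ hn']
    calc ((M:ℝ)*w)^2 ≤ (n:ℝ) * ∑ i : I, (e i : ℝ)^2 := by exact_mod_cast hc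
      _ = (∑ i : I, (e i : ℝ)^2) * n := by ring
  have hlow : (M:ℝ) * ((M:ℝ) - 1) * d ≤ (S:ℝ) := by
    have hcast : ((M * (M - 1) * d : ℕ) : ℝ) ≤ (S:ℝ) := by exact_mod_cast hlowN
    have hc1 : ((M - 1 : ℕ) : ℝ) = (M:ℝ) - 1 := by
      rw [Nat.cast_sub hM1]; simp
    push_cast [hc1] at hcast
    linarith [hcast]
  set r : ℝ := (Q:ℝ) * (w:ℝ)^2 / (((Q:ℝ) - 1) * n) with hr
  have hrw : (Q:ℝ)/((Q:ℝ)-1) * (((M:ℝ)*w)^2 / n) = (M:ℝ)^2 * r := by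
    rw [hr]; field_simp
  have key : (M:ℝ) * ((M:ℝ) - 1) * d ≤ 2 * M * (M * w) - (M:ℝ)^2 * r := by
    have hQpos : (0:ℝ) < (Q:ℝ)/((Q:ℝ)-1) := by positivity
    have h6 : (Q:ℝ)/((Q:ℝ)-1) * (((M:ℝ)*w)^2 / n) ≤ (Q:ℝ)/((Q:ℝ)-1) * ∑ i : I, (e i : ℝ)^2 :=
      mul_le_mul_of_nonneg_left hcauchy2 (le_of_lt hQpos)
    rw [hrw] at h6
    linarith [hlow, hup]
  have main : (M:ℝ) * ((M:ℝ) * ((d:ℝ) - 2*w + r)) ≤ (M:ℝ) * d := by nlinarith [key]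
  have final := le_of_mul_le_mul_left main hMpos
  rw [hr] at final
  exact final

lemma cget_sub {Fq : Type*} [Field Fq] {n : ℕ} (x y : Fin n → Fq) (k : ℕ) :
    cget (x - y) k = cget x k - cget y k := by
  unfold cget
  split
  · simp
  · simp

lemma wtb_eq {Fq : Type*} [Zero Fq] [DecidableEq Fq] {n : ℕ} (b : ℕ) (y : Fin n → Fq) :
    ((univ : Finset (Fin n)).filter fun i =>
      (fun j : Fin b => cget y (i.1 + j.1)) ≠ (0 : Fin b → Fq)).card = wtb b y := by
  classical
  rw [wtb, Finset.card_filter, Finset.card_filter, ← Fin.sum_univ_eq_sum_range]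
  refine Finset.sum_congr rfl fun i _ => ?_
  have hiff : ((fun j : Fin b => cget y (i.1 + j.1)) ≠ (0 : Fin b → Fq))
      ↔ ∃ j : Fin b, cget y (i.1 + j.1) ≠ 0 := by
    simp [Function.ne_iff]
  simp only [hiff]

lemma db_eq {Fq : Type*} [Field Fq] [DecidableEq Fq] {n : ℕ} (b : ℕ) (x y : Fin n → Fq) :
    db b x y = ((univ : Finset (Fin n)).filter fun i =>
      (fun j : Fin b => cget x (i.1 + j.1)) ≠ (fun j : Fin b => cget y (i.1 + j.1))).card := by
  rw [db, ← wtb_eq]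
  congr 1
  apply Finset.filter_congr
  intro i _
  simp [cget_sub, Function.ne_iff, sub_ne_zero]

/-- Corollary 4.4 (restricted Johnson bound for the `b`-symbol distance). -/
theorem restricted_johnson_bound {Fq : Type*} [Field Fq] [Fintype Fq] [DecidableEq Fq]
    {n d w b : ℕ} (hb1 : 1 ≤ b) (hbn : b ≤ n) (hn : 0 < n) (hd : 0 < d) (hw : 0 < w)
    (hden : 0 < (d : ℝ) - 2 * w +
      (Fintype.card Fq : ℝ) ^ b * (w : ℝ) ^ 2 / (((Fintype.card Fq : ℝ) ^ b - 1) * n)) :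
    (Awsize Fq n b d w : ℝ) ≤
      ⌊(d : ℝ) / ((d : ℝ) - 2 * w +
        (Fintype.card Fq : ℝ) ^ b * (w : ℝ) ^ 2 / (((Fintype.card Fq : ℝ) ^ b - 1) * n))⌋ := by
  classical
  have hq2 : 2 ≤ Fintype.card Fq := Fintype.one_lt_card
  set Sset : Set ℕ := {M | ∃ C : Finset (Fin n → Fq),
    (∀ x ∈ C, ∀ y ∈ C, x ≠ y → d ≤ db b x y) ∧ (∀ x ∈ C, wtb b x = w) ∧ C.card = M} with hSset
  have hAw : Awsize Fq n b d w = sSup Sset := rfl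
  have hne : Sset.Nonempty := ⟨0, ∅, by simp⟩
  have hbdd : BddAbove Sset := by
    refine ⟨Fintype.card (Fin n → Fq), fun M hM => ?_⟩
    obtain ⟨C, -, -, hC⟩ := hM
    rw [← hC]
    exact Finset.card_le_univ C
  obtain ⟨C, hCd, hCw, hCcard⟩ := Nat.sSup_mem hne hbdd
  have hcardA : Fintype.card (Fin b → Fq) = Fintype.card Fq ^ b := by
    simp [Fintype.card_fun]
  have hQ2 : 2 ≤ Fintype.card (Fin b → Fq) := by
    rw [hcardA]
    calc 2 ≤ Fintype.card Fq := hq2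
      _ = Fintype.card Fq ^ 1 := (pow_one _).symm
      _ ≤ Fintype.card Fq ^ b := Nat.pow_le_pow_right (by omega) hb1
  have key := johnson_aux (κ := {x // x ∈ C}) (I := Fin n) (A := Fin b → Fq)
    (0 : Fin b → Fq) (fun k i j => cget (k : Fin n → Fq) (i.1 + j.1)) (d := d) (w := w)
    (fun k l hkl => by
      rw [← db_eq]
      exact hCd k.1 k.2 l.1 l.2 (fun h => hkl (Subtype.ext h)))
    (fun k => by rw [wtb_eq]; exact hCw k.1 k.2)
    (by simpa using hn) hQ2
  rw [Fintype.card_coe, hcardA, Fintype.card_fin] at key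
  have hCeq : (C.card : ℝ) = (Awsize Fq n b d w : ℝ) := by
    rw [hCcard, hAw]
  push_cast at key
  rw [hCeq] at key
  have hfin : (Awsize Fq n b d w : ℝ) ≤ (d:ℝ) / ((d : ℝ) - 2 * w +
      (Fintype.card Fq : ℝ) ^ b * (w : ℝ) ^ 2 / (((Fintype.card Fq : ℝ) ^ b - 1) * n)) :=
    (le_div_iff₀ hden).mpr key
  have hZ : (Awsize Fq n b d w : ℤ) ≤ ⌊(d : ℝ) / ((d : ℝ) - 2 * w +
      (Fintype.card Fq : ℝ) ^ b * (w : ℝ) ^ 2 / (((Fintype.card Fq : ℝ) ^ b - 1) * n))⌋ :=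
    Int.le_floor.mpr (by exact_mod_cast hfin)
  exact_mod_cast hZ
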